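/- arXiv:1803.07097 — 7 statements merged into one kernel-verified Lean document; each statement's English description precedes it below -/
import Mathlib

section
/- The transformation algorithm that repeatedly picks a lowest gap-2+ chord in an n-vertex circle graph, contracts its lower area to a new inner vertex, and resolves at most 2k-1 crossing points when a gap-k chord is picked, terminates after at most n iterations and produces a planar graph with at most 6n vertices. -/
/-- The contraction loop on an `n`-vertex circle graph terminates after at
most `n` iterations and the resulting planar graph has at most `6 n` vertices.
`u i` is the number of cycle vertices before iteration `i`, `k i` is the gap of the
chord picked at iteration `i`; each iteration removes the `k i` vertices strictly inside
the arc and adds one new vertex, and planarization adds at most `2 * k i - 1` inner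
vertices; the sum of the gaps is at most `2 * n`. -/
theorem stmt2 (n t : ℕ) (u k : ℕ → ℕ)
    (hu0 : u 0 = n)
    (hk2 : ∀ i < t, 2 ≤ k i)
    (hstep : ∀ i < t, u (i + 1) + k i = u i + 1)
    (hksum : (∑ i ∈ Finset.range t, k i) ≤ 2 * n) :
    t ≤ n ∧ n + t + (∑ i ∈ Finset.range t, (2 * k i - 1)) ≤ 6 * n := by
  have key : ∀ i, i ≤ t → u i + (∑ j ∈ Finset.range i, k j) = n + i := by
    intro i hi
    induction i with
    | zero => simp [hu0]
    | succ m ih =>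
      have hm : m < t := hi
      have h1 := hstep m hm
      have h2 := ih (Nat.le_of_lt hm)
      rw [Finset.sum_range_succ]
      omega
  have hsum2 : 2 * t ≤ ∑ j ∈ Finset.range t, k j := by
    calc 2 * t = ∑ _j ∈ Finset.range t, 2 := by simp [mul_comm]
    _ ≤ ∑ j ∈ Finset.range t, k j := Finset.sum_le_sum fun i hi => hk2 i (Finset.mem_range.mp hi)
  have hkey := key t le_rfl
  have ht : t ≤ n := by omega
  refine ⟨ht, ?_⟩
  have hb : (∑ i ∈ Finset.range t, (2 * k i - 1)) ≤ 2 * ∑ i ∈ Finset.range t, k i := by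
    rw [Finset.mul_sum]
    exact Finset.sum_le_sum fun i _ => Nat.sub_le _ _
  omega
end

section
/- Under the level assignment of Algorithm 3 (calc_level), for vertices t_i^ell and t_j^ell of T^ell with i > j, the final in-level of t_i^ell is strictly greater than the final out-level of t_j^ell. -/
/-- Cumulative shift `S i = Δ_0 + ⋯ + Δ_i` of Algorithm 3 (calc_level):
for the `i`-th vertex of `T^ℓ` with temporary in-level `f i` and temporary
out-level `g i`, `Δ_{i+1} = max 0 (max_{j ≤ i} (ℓout_j - j/n) - (ℓin_{i+1} - (i+1)/n))`,
where current levels are the temporary ones plus the shifts applied so far.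
The final levels are `ℓin i = f i + shiftSum f g n i` and `ℓout i = g i + shiftSum f g n i`. -/
noncomputable def shiftSum (f g : ℕ → ℚ) (n : ℕ) : ℕ → ℚ
  | 0 => 0
  | i + 1 =>
    shiftSum f g n i +
      max 0 (((Finset.range (i + 1)).attach.sup'
          (Finset.attach_nonempty_iff.mpr Finset.nonempty_range_add_one)
          fun j => g j.1 + shiftSum f g n j.1 - (j.1 : ℚ) / n) -
        (f (i + 1) + shiftSum f g n i - ((i + 1 : ℕ) : ℚ) / n))
  decreasing_by
  all_goals first
    | exact Nat.lt_succ_self i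
    | exact Finset.mem_range.mp j.2

/-- under the level assignment of Algorithm 3, if `i > j` then the final
in-level of `t_i^ℓ` is strictly greater than the final out-level of `t_j^ℓ`.
Temporary levels are `f i = a i + i / n` and `g i = b i + i / n` with integers
`a i`, `b i` and `n > m`. -/
theorem stmt3 (m n : ℕ) (hmn : m < n) (a b : ℕ → ℤ) (f g : ℕ → ℚ)
    (hf : ∀ i < m, f i = (a i : ℚ) + (i : ℚ) / n)
    (hg : ∀ i < m, g i = (b i : ℚ) + (i : ℚ) / n) :
    ∀ i j, j < i → i < m →
      g j + shiftSum f g n j < f i + shiftSum f g n i := by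
  intro i j hji him
  obtain ⟨k, rfl⟩ : ∃ k, i = k + 1 := ⟨i - 1, by omega⟩
  have hn : (0 : ℚ) < n := by exact_mod_cast Nat.pos_of_ne_zero (by omega)
  set M := ((Finset.range (k + 1)).attach.sup'
      (Finset.attach_nonempty_iff.mpr Finset.nonempty_range_add_one)
      fun j => g j.1 + shiftSum f g n j.1 - (j.1 : ℚ) / n) with hM
  have hle : g j + shiftSum f g n j - (j : ℚ) / n ≤ M := by
    rw [hM]
    exact Finset.le_sup'
      (fun j : {x // x ∈ Finset.range (k+1)} => g j.1 + shiftSum f g n j.1 - (j.1 : ℚ) / n)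
      (Finset.mem_attach _ ⟨j, Finset.mem_range.mpr (by omega)⟩)
  have hsucc : shiftSum f g n (k + 1) = shiftSum f g n k +
      max 0 (M - (f (k + 1) + shiftSum f g n k - ((k + 1 : ℕ) : ℚ) / n)) := by
    rw [shiftSum]
  have hmax : M - (f (k + 1) + shiftSum f g n k - ((k + 1 : ℕ) : ℚ) / n) ≤
      max 0 (M - (f (k + 1) + shiftSum f g n k - ((k + 1 : ℕ) : ℚ) / n)) :=
    le_max_right _ _
  have hdiv : (j : ℚ) / n < ((k + 1 : ℕ) : ℚ) / n := by
    gcongr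
  linarith
end

section
/- In a circle graph obtained from reachability of a plane graph, if t_i^ell, t_j^ell are on one arc and T^u is on the complementary arc (with indexing orders as in the algorithm), and i > j, then max{k : (t_i^ell, t_k^u) is an edge} >= max{k : (t_j^ell, t_k^u) is an edge}; equivalently, the temporary in-levels satisfy t_in(t_i^ell) > t_in(t_j^ell). -/
/-- in a circle graph obtained from reachability of a plane graph, with
`T^ℓ = (t_0^ℓ, …, t_{m-1}^ℓ)` on one arc and `T^u = (t_0^u, …, t_{m'-1}^u)` on the
complementary arc, the edge set `E` (from lower to upper vertices, represented by
indices) is closed under the crossing rule: if `(t_i^ℓ, t_k^u)` and `(t_j^ℓ, t_{k'}^u)`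
are edges that cross (`j < i` and `k < k'`) then `(t_i^ℓ, t_{k'}^u)` is an edge.  Then
for `i > j`, `max {k | E i k} ≥ max {k | E j k}`; equivalently the temporary in-levels
`t_in(t_i^ℓ) = max{k | E i k} + i / n` satisfy `t_in(t_i^ℓ) > t_in(t_j^ℓ)`. -/
theorem stmt4 (m m' n : ℕ) (hn : 0 < n)
    (E : Fin m → Fin m' → Prop) [∀ i k, Decidable (E i k)]
    (hclosure : ∀ (i j : Fin m) (k k' : Fin m'),
      E i k → E j k' → j < i → k < k' → E i k')
    (i j : Fin m) (hij : j < i)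
    (hi : (Finset.univ.filter fun k => E i k).Nonempty)
    (hj : (Finset.univ.filter fun k => E j k).Nonempty) :
    (Finset.univ.filter fun k => E j k).max' hj ≤
        (Finset.univ.filter fun k => E i k).max' hi ∧
      ((((Finset.univ.filter fun k => E j k).max' hj).val : ℚ) + (j.val : ℚ) / n <
        (((Finset.univ.filter fun k => E i k).max' hi).val : ℚ) + (i.val : ℚ) / n) := by
  set ki := (Finset.univ.filter fun k => E i k).max' hi with hki
  set kj := (Finset.univ.filter fun k => E j k).max' hj with hkj
  have hEi : E i ki := by
    have := (Finset.univ.filter fun k => E i k).max'_mem hi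
    simpa using this
  have hEj : E j kj := by
    have := (Finset.univ.filter fun k => E j k).max'_mem hj
    simpa using this
  have hle : kj ≤ ki := by
    by_contra h
    push_neg at h
    have hE : E i kj := hclosure i j ki kj hEi hEj hij h
    have : kj ≤ ki := Finset.le_max' _ kj (by simpa using hE)
    exact absurd this (not_le.mpr h)
  refine ⟨hle, ?_⟩
  have h1 : ((kj.val : ℚ)) ≤ (ki.val : ℚ) := by exact_mod_cast hle
  have h2 : ((j.val : ℚ)) / n < (i.val : ℚ) / n := by
    have hn2 : (0 : ℚ) < n := by exact_mod_cast hn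
    have hji : ((j.val : ℚ)) < (i.val : ℚ) := by exact_mod_cast hij
    exact div_lt_div_of_pos_right hji hn2
  linarith
end

section
/- In a circle graph closed under the crossing rule, with T^ell and T^u indexed as in the algorithm, if i > j then min{k : (t_k^u, t_i^ell) is an edge} >= min{k : (t_k^u, t_j^ell) is an edge}; equivalently, the temporary out-levels satisfy t_out(t_i^ell) > t_out(t_j^ell). -/
/-- in a circle graph closed under the crossing rule, with
`T^ℓ = (t_0^ℓ, …, t_{m-1}^ℓ)` on one arc and `T^u = (t_0^u, …, t_{m'-1}^u)` on the
complementary arc, `E k i` meaning that `(t_k^u, t_i^ℓ)` is an edge, the crossing rule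
reads: if `(t_k^u, t_i^ℓ)` and `(t_{k'}^u, t_j^ℓ)` cross (`j < i` and `k < k'`) then
`(t_k^u, t_j^ℓ)` is an edge.  Then for `i > j`,
`min {k | E k i} ≥ min {k | E k j}`; equivalently the temporary out-levels
`t_out(t_i^ℓ) = min{k | E k i} + i / n` satisfy `t_out(t_i^ℓ) > t_out(t_j^ℓ)`. -/
theorem stmt5 (m m' n : ℕ) (hn : 0 < n)
    (E : Fin m' → Fin m → Prop) [∀ k i, Decidable (E k i)]
    (hclosure : ∀ (k k' : Fin m') (i j : Fin m),
      E k i → E k' j → j < i → k < k' → E k j)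
    (i j : Fin m) (hij : j < i)
    (hi : (Finset.univ.filter fun k => E k i).Nonempty)
    (hj : (Finset.univ.filter fun k => E k j).Nonempty) :
    (Finset.univ.filter fun k => E k j).min' hj ≤
        (Finset.univ.filter fun k => E k i).min' hi ∧
      ((((Finset.univ.filter fun k => E k j).min' hj).val : ℚ) + (j.val : ℚ) / n <
        (((Finset.univ.filter fun k => E k i).min' hi).val : ℚ) + (i.val : ℚ) / n) := by
  set ki := (Finset.univ.filter fun k => E k i).min' hi with hki
  set kj := (Finset.univ.filter fun k => E k j).min' hj with hkj
  have hEi : E ki i := by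
    have := (Finset.univ.filter fun k => E k i).min'_mem hi
    simpa using this
  have hEj : E kj j := by
    have := (Finset.univ.filter fun k => E k j).min'_mem hj
    simpa using this
  have hle : kj ≤ ki := by
    by_contra h
    push_neg at h
    have hEkj2 : E ki j := hclosure ki kj i j hEi hEj hij h
    have : kj ≤ ki := Finset.min'_le _ _ (by simpa using hEkj2)
    exact absurd this (not_le.mpr h)
  refine ⟨hle, ?_⟩
  have h1 : ((kj.val : ℚ)) ≤ (ki.val : ℚ) := by exact_mod_cast hle
  have h2 : ((j.val : ℚ)) / n < (i.val : ℚ) / n := by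
    apply div_lt_div_of_pos_right ?_ ?_
    · exact_mod_cast hij
    · exact_mod_cast hn
  linarith
end

section
/- Under the level assignment of Algorithm 3, for any p, q: if the temporary in-level of t_p^ell is at least the temporary out-level of t_q^ell, then the final in-level of t_p^ell is at least the final out-level of t_q^ell. -/
/-- the Δ-shifting of Algorithm 3 preserves the comparison between
temporary in- and out-levels: if the temporary in-level of `t_p^ℓ` is at least the
temporary out-level of `t_q^ℓ`, the same holds for the final levels.
Temporary levels have the form `integer + index / n` and are strictly increasing
in the index. -/
theorem stmt6 (m n : ℕ) (hmn : m < n) (a b : ℕ → ℤ) (f g : ℕ → ℚ)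
    (hf : ∀ i < m, f i = (a i : ℚ) + (i : ℚ) / n)
    (hg : ∀ i < m, g i = (b i : ℚ) + (i : ℚ) / n)
    (hfmono : ∀ i j, j < i → i < m → f j < f i)
    (hgmono : ∀ i j, j < i → i < m → g j < g i) :
    ∀ p q, p < m → q < m → g q ≤ f p →
      g q + shiftSum f g n q ≤ f p + shiftSum f g n p := by
  intro p q hp hq hgf
  have hn : (0:ℚ) < n := by
    have : 0 < n := by omega
    exact_mod_cast this
  have Sstep : ∀ i, shiftSum f g n i ≤ shiftSum f g n (i+1) := by
    intro i
    rw [shiftSum]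
    have := le_max_left (0:ℚ) (((Finset.range (i + 1)).attach.sup'
          (Finset.attach_nonempty_iff.mpr Finset.nonempty_range_add_one)
          fun j => g j.1 + shiftSum f g n j.1 - (j.1 : ℚ) / n) -
        (f (i + 1) + shiftSum f g n i - ((i + 1 : ℕ) : ℚ) / n))
    linarith
  have Smono : Monotone (shiftSum f g n) := monotone_nat_of_le_succ Sstep
  rcases le_or_gt q p with hqp | hpq
  · have := Smono hqp
    linarith
  -- now p < q
  have cast_gap : ∀ (x y : ℤ), (x:ℚ) < (y:ℚ) + 1 → (x:ℚ) ≤ (y:ℚ) := by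
    intro x y h
    have h' : x < y + 1 := by exact_mod_cast h
    exact_mod_cast Int.lt_add_one_iff.mp h'
  have hdivlt : ∀ k : ℕ, k < n → (k:ℚ)/n < 1 := by
    intro k hk
    rw [div_lt_one hn]
    exact_mod_cast hk
  have hdivnn : ∀ k : ℕ, (0:ℚ) ≤ (k:ℚ)/n := by
    intro k; positivity
  have hbk : ∀ k ≤ q, (b k:ℚ) + (k:ℚ)/n ≤ (a p:ℚ) + (p:ℚ)/n := by
    intro k hk
    have h1 : g k ≤ g q := by
      rcases eq_or_lt_of_le hk with h | h
      · rw [h]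
      · exact le_of_lt (hgmono q k h hq)
    have h2 := h1.trans hgf
    rwa [hg k (by omega), hf p hp] at h2
  -- for k ≤ p : b k ≤ a p
  have hb1 : ∀ k ≤ p, (b k:ℚ) ≤ (a p:ℚ) := by
    intro k hk
    have h1 := hbk k (le_trans hk (le_of_lt hpq))
    have h2 := hdivnn k
    have h3 := hdivlt p (by omega)
    exact cast_gap _ _ (by linarith)
  -- for p < k ≤ q : b k ≤ a p - 1
  have hb2 : ∀ k, p < k → k ≤ q → (b k:ℚ) ≤ (a p:ℚ) - 1 := by
    intro k h1 h2
    have h3 := hbk k h2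
    have h4 : (p:ℚ)/n < (k:ℚ)/n := by
      have : (p:ℚ) < (k:ℚ) := by exact_mod_cast h1
      gcongr
    have h5 : (b k:ℚ) < (a p:ℚ) := by linarith
    have h6 : b k < a p := by exact_mod_cast h5
    have h7 : b k + 1 ≤ a p := h6
    have : (b k:ℚ) + 1 ≤ (a p:ℚ) := by exact_mod_cast h7
    linarith
  -- a is ≥ a p for indices above p
  have ha : ∀ i, p < i → i < m → (a p:ℚ) ≤ (a i:ℚ) := by
    intro i h1 h2
    have h3 := hfmono i p h1 h2
    rw [hf p hp, hf i h2] at h3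
    have h4 := hdivlt i (by omega)
    have h5 := hdivnn p
    exact cast_gap _ _ (by linarith)
  -- main induction: no shift occurs between p and q, and all out-levels stay below a p + S p
  have key : ∀ j, p ≤ j → j ≤ q →
      shiftSum f g n j ≤ shiftSum f g n p ∧
      ∀ k ≤ j, g k + shiftSum f g n k - (k:ℚ)/n ≤ (a p:ℚ) + shiftSum f g n p := by
    intro j hpj
    induction j, hpj using Nat.le_induction with
    | base =>
      intro _
      refine ⟨le_rfl, ?_⟩
      intro k hk
      have h1 := hb1 k hk
      have h2 := Smono hk
      rw [hg k (by omega)]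
      linarith
    | succ j hpj ih =>
      intro hjq
      obtain ⟨ih1, ih2⟩ := ih (by omega)
      have hsup : ((Finset.range (j + 1)).attach.sup'
          (Finset.attach_nonempty_iff.mpr Finset.nonempty_range_add_one)
          fun k => g k.1 + shiftSum f g n k.1 - (k.1 : ℚ) / n) ≤
          (a p:ℚ) + shiftSum f g n p := by
        apply Finset.sup'_le
        intro k _
        exact ih2 k.1 (by have := Finset.mem_range.mp k.2; omega)
      have haj : (a p:ℚ) ≤ (a (j+1):ℚ) := ha (j+1) (by omega) (by omega)
      have hSpj : shiftSum f g n p ≤ shiftSum f g n j := Smono hpj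
      have hfj1 : f (j+1) = (a (j+1):ℚ) + ((j+1:ℕ):ℚ)/n := hf (j+1) (by omega)
      have hzero : max 0 (((Finset.range (j + 1)).attach.sup'
          (Finset.attach_nonempty_iff.mpr Finset.nonempty_range_add_one)
          fun k => g k.1 + shiftSum f g n k.1 - (k.1 : ℚ) / n) -
        (f (j + 1) + shiftSum f g n j - ((j + 1 : ℕ) : ℚ) / n)) = 0 := by
        apply max_eq_left
        rw [hfj1]
        linarith
      have hSj1 : shiftSum f g n (j+1) = shiftSum f g n j := by
        rw [shiftSum, hzero, add_zero]
      constructor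
      · rw [hSj1]; exact ih1
      · intro k hk
        rcases Nat.lt_succ_iff_lt_or_eq.mp (Nat.lt_succ_of_le hk) with h | h
        · exact ih2 k (by omega)
        · subst h
          rw [hg (j+1) (by omega), hSj1]
          have h1 := hb2 (j+1) (by omega) hjq
          linarith
  obtain ⟨hSq, -⟩ := key q (le_of_lt hpq) le_rfl
  have hbq := hb2 q hpq le_rfl
  rw [hg q hq, hf p hp]
  have h1 := hdivlt q (by omega)
  have h2 := hdivnn p
  linarith
end

section
/- If a token tour in gadget graph G_{t'} passes through the bundling vertex v_*^t via two edges, entering from the lower area and leaving into the upper area of the chord e_*^t, and the source edges of the two labels used are (t_p^ell, t_i^u) and (t_q^ell, t_j^u) respectively, then i >= j and p >= q. -/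
/-- a token tour entering the bundling vertex `v_*^t` from the lower
area and leaving into the upper area of the chord `e_*^t`.  `E p i` means
`(t_p^ℓ, t_i^u)` is an edge of the circle graph; `ellin` is the final in-level
function on `T^ℓ` produced by Algorithm 3 (strictly increasing in the index).
The entering label has out-level `ellin p`, the leaving label has in-level `ellin q`
(taken at the minimizing lower vertex `t_q^ℓ` with edge to the exit vertex
`t_j^u`), and the token rule forces `ellin q ≤ ellin p`.  The source edges are
`(t_p^ℓ, t_i^u)` with `i` maximal for `p`, and `(t_q^ℓ, t_j^u)`.  The circle-graph
edges are closed under the crossing rule.  Then `i ≥ j` and `p ≥ q`. -/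
theorem stmt10 (m m' : ℕ)
    (E : Fin m → Fin m' → Prop)
    (ellin : Fin m → ℚ)
    (hmono : ∀ i j : Fin m, j < i → ellin j < ellin i)
    (hclosure : ∀ (p' q' : Fin m) (i' j' : Fin m'),
      E p' i' → E q' j' → q' ≤ p' → i' < j' → E p' j')
    (p q : Fin m) (i j : Fin m')
    (htoken : ellin q ≤ ellin p)
    (hpi : E p i) (hmax : ∀ k, E p k → k ≤ i)
    (hqj : E q j) (hqmin : ∀ r : Fin m, E r j → ellin q ≤ ellin r) :
    j ≤ i ∧ q ≤ p := by
  have hqp : q ≤ p := by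
    by_contra h
    exact absurd htoken (not_le.mpr (hmono q p (lt_of_not_ge h)))
  refine ⟨?_, hqp⟩
  by_contra h
  exact absurd (hmax j (hclosure p q i j hpi hqj hqp (lt_of_not_ge h))) (not_le.mpr (lt_of_not_ge h))
end

section
/- For the parent map maintained by the transformation algorithm, cyclic order is preserved: if u, v, w are vertices of the current cycle U_t in clockwise order in G_t[U_t], then any rim vertices x, y, z of the original circle graph with p^t(x)=u, p^t(y)=v, p^t(z)=w appear in clockwise order on the original cycle. -/
/-- A run of the cycle-contraction process of the transformation algorithm.
`U t` is the cycle of the circle-graph part at step `t` (as a list in clockwise order,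
up to rotation), `p t` is the parent map from original rim vertices (numbers `< n`,
placed clockwise as `0, 1, …, n-1`) to the current cycle, `a t`/`b t` are the tail and
head of the chord `e_*^t` picked at step `t`, and `vstar t` is the fresh bundling
vertex replacing the open arc (of length `≥ 2`) strictly between `a t` and `b t`. -/
structure ContractionRun (n : ℕ) where
  T : ℕ
  U : ℕ → List ℕ
  p : ℕ → ℕ → ℕ
  a : ℕ → ℕ
  b : ℕ → ℕ
  vstar : ℕ → ℕ
  hU0 : U 0 = List.range n
  hp0 : ∀ x, x < n → p 0 x = x
  hstep : ∀ t, t < T → ∃ (seg post : List ℕ) (rot : ℕ),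
    (U t).rotate rot = a t :: (seg ++ b t :: post) ∧
    2 ≤ seg.length ∧
    vstar t ∉ U t ∧
    U (t + 1) = a t :: vstar t :: b t :: post ∧
    (∀ x, x < n → p (t + 1) x = if p t x ∈ seg then vstar t else p t x)

/-- `x`, `y`, `z` occur in this clockwise cyclic order on the cycle given by the
list `l`. -/
def CyclicTriple (l : List ℕ) (x y z : ℕ) : Prop :=
  ∃ (r i j k : ℕ), i < j ∧ j < k ∧ (l.rotate r)[i]? = some x ∧
    (l.rotate r)[j]? = some y ∧ (l.rotate r)[k]? = some z

private lemma split_at_getElem {l : List ℕ} {i : ℕ} {x : ℕ} (h : l[i]? = some x) :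
    ∃ A B, l = A ++ x :: B ∧ A.length = i := by
  rw [List.getElem?_eq_some_iff] at h
  obtain ⟨hi, hx⟩ := h
  refine ⟨l.take i, l.drop (i+1), ?_, ?_⟩
  · conv_lhs => rw [← List.take_append_drop i l]
    rw [List.drop_eq_getElem_cons hi, hx]
  · rw [List.length_take]; omega

private lemma cyclicTriple_of_rotate {l : List ℕ} {s x y z : ℕ}
    (h : CyclicTriple (l.rotate s) x y z) : CyclicTriple l x y z := by
  obtain ⟨r, i, j, k, hij, hjk, hx, hy, hz⟩ := h
  rw [List.rotate_rotate] at hx hy hz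
  exact ⟨s + r, i, j, k, hij, hjk, hx, hy, hz⟩

private lemma cyclicTriple_aligned {l : List ℕ} {x y z : ℕ} (h : CyclicTriple l x y z) :
    ∃ r A B C, l.rotate r = x :: (A ++ y :: (B ++ z :: C)) := by
  obtain ⟨r, i, j, k, hij, hjk, hx, hy, hz⟩ := h
  set l0 := l.rotate r with hl0
  have hk : k < l0.length := by
    rw [List.getElem?_eq_some_iff] at hz; exact hz.1
  have hi : i ≤ l0.length := by omega
  have hrot : l0.rotate i = l0.drop i ++ l0.take i := List.rotate_eq_drop_append_take hi
  have key : ∀ m, m < l0.length - i → (l0.rotate i)[m]? = l0[i+m]? := by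
    intro m hm
    rw [hrot, List.getElem?_append_left (by simp; omega), List.getElem?_drop]
  have hx' : (l0.rotate i)[0]? = some x := by rw [key 0 (by omega)]; simpa using hx
  have hy' : (l0.rotate i)[j-i]? = some y := by
    rw [key _ (by omega), show i+(j-i) = j by omega]; exact hy
  have hz' : (l0.rotate i)[k-i]? = some z := by
    rw [key _ (by omega), show i+(k-i) = k by omega]; exact hz
  obtain ⟨P, C, hPC, hPlen⟩ := split_at_getElem hz'
  have hy'' : P[j-i]? = some y := by
    rw [hPC, List.getElem?_append_left (by omega)] at hy'
    exact hy'
  obtain ⟨Q, B, hQB, hQlen⟩ := split_at_getElem hy''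
  have hx'' : Q[0]? = some x := by
    rw [hPC, List.getElem?_append_left (by omega)] at hx'
    rw [hQB, List.getElem?_append_left (by omega)] at hx'
    exact hx'
  obtain ⟨E, A, hEA, hElen⟩ := split_at_getElem hx''
  have hE : E = [] := List.length_eq_zero_iff.mp hElen
  refine ⟨r + i, A, B, C, ?_⟩
  have heq : l.rotate (r + i) = l0.rotate i := by rw [hl0, List.rotate_rotate]
  rw [heq, hPC, hQB, hEA, hE]
  simp

private lemma cyclicTriple_of_aligned {l : List ℕ} {x y z r : ℕ} {A B C : List ℕ}
    (h : l.rotate r = x :: (A ++ y :: (B ++ z :: C))) : CyclicTriple l x y z := by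
  refine ⟨r, 0, A.length + 1, A.length + B.length + 2, by omega, by omega, ?_, ?_, ?_⟩
  · rw [h]; simp
  · rw [h, List.getElem?_cons_succ, List.getElem?_append_right (le_refl _)]
    simp
  · rw [h, show A.length + B.length + 2 = (A.length + B.length + 1) + 1 from rfl,
      List.getElem?_cons_succ, List.getElem?_append_right (by omega),
      show A.length + B.length + 1 - A.length = B.length + 1 from by omega,
      List.getElem?_cons_succ, List.getElem?_append_right (le_refl _)]
    simp

private lemma rotate_append_self (P Q : List ℕ) : (P ++ Q).rotate P.length = Q ++ P := by
  rw [List.rotate_eq_drop_append_take (by simp), List.drop_left, List.take_left]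

private lemma exists_rotate_flatMap (l : List ℕ) (f : ℕ → List ℕ) (r : ℕ) :
    ∃ s, (l.flatMap f).rotate s = (l.rotate r).flatMap f := by
  rcases eq_or_ne l [] with rfl | hne
  · exact ⟨0, by simp⟩
  · have hlen : 0 < l.length := List.length_pos_iff.mpr hne
    have hml : r % l.length ≤ l.length := le_of_lt (Nat.mod_lt _ hlen)
    have h1 : l.rotate r = l.drop (r % l.length) ++ l.take (r % l.length) := by
      rw [← List.rotate_mod, List.rotate_eq_drop_append_take hml]
    refine ⟨((l.take (r % l.length)).flatMap f).length, ?_⟩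
    have h2 : l.flatMap f =
        (l.take (r % l.length)).flatMap f ++ (l.drop (r % l.length)).flatMap f := by
      rw [← List.flatMap_append, List.take_append_drop]
    rw [h2, rotate_append_self, h1, List.flatMap_append]

private lemma flatMap_eq_self {l : List ℕ} {f : ℕ → List ℕ} (h : ∀ c ∈ l, f c = [c]) :
    l.flatMap f = l := by
  induction l with
  | nil => simp
  | cons c l ih =>
    rw [List.flatMap_cons, h c (by simp), ih (fun d hd => h d (by simp [hd]))]
    rfl

private lemma cyclicTriple_flatMap {l : List ℕ} {f : ℕ → List ℕ} {u v w x y z : ℕ}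
    (h : CyclicTriple l u v w) (hx : x ∈ f u) (hy : y ∈ f v) (hz : z ∈ f w) :
    CyclicTriple (l.flatMap f) x y z := by
  obtain ⟨r, A, B, C, hrot⟩ := cyclicTriple_aligned h
  obtain ⟨s, hs⟩ := exists_rotate_flatMap l f r
  obtain ⟨A1, A2, hA⟩ := List.append_of_mem hx
  obtain ⟨B1, B2, hB⟩ := List.append_of_mem hy
  obtain ⟨C1, C2, hC⟩ := List.append_of_mem hz
  have hflat : (l.flatMap f).rotate s =
      A1 ++ (x :: ((A2 ++ A.flatMap f ++ B1) ++ y :: ((B2 ++ B.flatMap f ++ C1) ++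
        z :: (C2 ++ C.flatMap f)))) := by
    rw [hs, hrot]
    simp [List.flatMap_cons, List.flatMap_append, hA, hB, hC]
  apply cyclicTriple_of_rotate (s := s)
  apply cyclicTriple_of_aligned (r := A1.length)
    (A := A2 ++ A.flatMap f ++ B1) (B := B2 ++ B.flatMap f ++ C1)
    (C := C2 ++ C.flatMap f ++ A1)
  rw [hflat, rotate_append_self]
  simp

private lemma parent_mem (n : ℕ) (R : ContractionRun n) :
    ∀ t, t ≤ R.T → ∀ x, x < n → R.p t x ∈ R.U t := by
  intro t
  induction t with
  | zero => intro _ x hx; rw [R.hp0 x hx, R.hU0]; simpa using hx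
  | succ t ih =>
    intro ht x hx
    obtain ⟨seg, post, rot, hrot, hseg, hnv, hU1, hp1⟩ := R.hstep t (by omega)
    have hmem := ih (by omega) x hx
    rw [hp1 x hx]
    by_cases hc : R.p t x ∈ seg
    · simp [hc, hU1]
    · simp only [hc, if_false]
      have hmm : R.p t x ∈ (R.U t).rotate rot := List.mem_rotate.mpr hmem
      rw [hrot] at hmm
      simp only [List.mem_cons, List.mem_append] at hmm
      rcases hmm with h1 | h1 | h1 | h1
      · simp [hU1, h1]
      · exact absurd h1 hc
      · simp [hU1, h1]
      · simp [hU1, h1]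

/-- the parent map of the transformation algorithm preserves cyclic
order: if `u, v, w` appear in clockwise order on the cycle `U t` of `G_t[U_t]`, then
any original rim vertices `x, y, z` with parents `u, v, w` appear in clockwise order
on the original cycle. -/
theorem stmt11 (n : ℕ) (R : ContractionRun n) (t : ℕ) (ht : t ≤ R.T)
    (u v w x y z : ℕ) (hx : x < n) (hy : y < n) (hz : z < n)
    (hpu : R.p t x = u) (hpv : R.p t y = v) (hpw : R.p t z = w)
    (h : CyclicTriple (R.U t) u v w) :
    CyclicTriple (R.U 0) x y z := by
  revert ht hpu hpv hpw h
  revert u v w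
  induction t with
  | zero =>
    intro u v w ht hpu hpv hpw h
    rw [R.hp0 x hx] at hpu
    rw [R.hp0 y hy] at hpv
    rw [R.hp0 z hz] at hpw
    subst hpu hpv hpw
    exact h
  | succ t ih =>
    intro u v w ht hpu hpv hpw h
    obtain ⟨seg, post, rot, hrot, hseg, hnv, hU1, hp1⟩ := R.hstep t (by omega)
    set f : ℕ → List ℕ := fun c => if c = R.vstar t then seg else [c] with hf
    have hvne : ∀ c, c ∈ R.U t → c ≠ R.vstar t := fun c hc he => hnv (he ▸ hc)
    have key : ∀ (q c : ℕ), q < n → R.p (t+1) q = c → R.p t q ∈ f c := by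
      intro q c hq hpc
      have hmem : R.p t q ∈ R.U t := parent_mem n R t (by omega) q hq
      rw [hp1 q hq] at hpc
      by_cases hcc : R.p t q ∈ seg
      · rw [if_pos hcc] at hpc; subst hpc; simp [hf, hcc]
      · rw [if_neg hcc] at hpc; subst hpc
        simp [hf, hvne _ hmem]
    have hsub : ∀ c, c ∈ (R.U t).rotate rot → c ∈ R.U t :=
      fun c hc => List.mem_rotate.mp hc
    have ha : f (R.a t) = [R.a t] := by
      have : R.a t ∈ R.U t := hsub _ (by rw [hrot]; simp)
      simp [hf, hvne _ this]
    have hb : f (R.b t) = [R.b t] := by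
      have : R.b t ∈ R.U t := hsub _ (by rw [hrot]; simp)
      simp [hf, hvne _ this]
    have hv : f (R.vstar t) = seg := by simp [hf]
    have hpost : post.flatMap f = post := by
      apply flatMap_eq_self
      intro c hc
      have : c ∈ R.U t := hsub _ (by rw [hrot]; simp [hc])
      simp [hf, hvne _ this]
    have hUflat : (R.U (t+1)).flatMap f = (R.U t).rotate rot := by
      rw [hU1, hrot, List.flatMap_cons, List.flatMap_cons, List.flatMap_cons,
        ha, hb, hv, hpost]
      simp
    have hct : CyclicTriple ((R.U (t+1)).flatMap f) (R.p t x) (R.p t y) (R.p t z) :=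
      cyclicTriple_flatMap h (key x u hx hpu) (key y v hy hpv) (key z w hz hpw)
    rw [hUflat] at hct
    exact ih (R.p t x) (R.p t y) (R.p t z) (by omega) rfl rfl rfl
      (cyclicTriple_of_rotate hct)
end
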